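/- Let x > 0, y ≥ 2, α > 0 be real and let 0 < T₀ ≤ T. Then | ∫_{α+iT₀}^{α+iT} ζ(s,y)·x^s/s ds | ≤ x^α·ζ(α,y) · ∫_{T₀}^{T} exp( −W(y,1,t) ) · dt/√(α² + t²). -/

import Mathlib

/-- `ζ(σ,y) = ∏_{p ≤ y, p prime} (1 - p^{-σ})⁻¹` for real `σ`. -/
noncomputable def zetaR (s y : ℝ) : ℝ :=
  ∏ p ∈ (Finset.range (⌊y⌋₊ + 1)).filter Nat.Prime, (1 - (p : ℝ) ^ (-s))⁻¹

/-- `ζ(s,y) = ∏_{p ≤ y, p prime} (1 - p^{-s})⁻¹` for complex `s`. -/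
noncomputable def zetaC (s : ℂ) (y : ℝ) : ℂ :=
  ∏ p ∈ (Finset.range (⌊y⌋₊ + 1)).filter Nat.Prime, (1 - (p : ℂ) ^ (-s))⁻¹

/-- `W(v,w,t) = ∑_{w < p ≤ v, p prime} (1 - cos(t log p))/p^α`. -/
noncomputable def W (α v w t : ℝ) : ℝ :=
  ∑ p ∈ (Finset.range (⌊v⌋₊ + 1)).filter (fun p : ℕ => Nat.Prime p ∧ w < (p : ℝ)),
    (1 - Real.cos (t * Real.log p)) / (p : ℝ) ^ α

open Real in
lemma aux1 (u : ℝ) (hu : 0 ≤ u) : 1 - u ≤ (1 + u) * Real.exp (-(2*u)) := by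
  set f : ℝ → ℝ := fun t => (1+t) * Real.exp (-(2*t)) + t with hf
  have hd : ∀ t : ℝ, HasDerivAt f (1 * Real.exp (-(2*t)) + (1+t) * (Real.exp (-(2*t)) * (-2)) + 1) t := by
    intro t
    have h1 : HasDerivAt (fun t : ℝ => 1+t) 1 t := (hasDerivAt_id t).const_add 1
    have h2 : HasDerivAt (fun t : ℝ => -(2*t)) (-2) t := by
      exact (((hasDerivAt_id t).const_mul (2:ℝ)).neg).congr_deriv (by simp)
    have h3 := h1.mul h2.exp
    exact (h3.add (hasDerivAt_id t)).congr_deriv (by ring)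
  have hmono : MonotoneOn f (Set.Ici (0:ℝ)) := by
    apply monotoneOn_of_deriv_nonneg (convex_Ici 0)
    · exact (Continuous.continuousOn (by continuity))
    · intro t ht
      exact (hd t).differentiableAt.differentiableWithinAt
    · intro t ht
      rw [(hd t).deriv]
      have h4 : 2*t + 1 ≤ Real.exp (2*t) := by simpa using Real.add_one_le_exp (2*t)
      have h5 : Real.exp (-(2*t)) = (Real.exp (2*t))⁻¹ := by rw [Real.exp_neg]
      have h6 := Real.exp_pos (2*t)
      rw [h5]
      rw [interior_Ici] at ht
      have ht' : 0 < t := ht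
      have h7 : Real.exp (2*t) * (Real.exp (2*t))⁻¹ = 1 := mul_inv_cancel₀ (ne_of_gt h6)
      nlinarith [mul_le_mul_of_nonneg_right h4 (le_of_lt (inv_pos.2 h6)), h7, inv_pos.2 h6]
  have := hmono (Set.self_mem_Ici) (Set.mem_Ici.2 hu) hu
  simp only [hf] at this
  simp at this
  linarith

lemma aux2 (u : ℝ) (hu : 0 ≤ u) : (1 - u) * Real.exp (2*u) ≤ 1 + u := by
  have h1 := aux1 u hu
  have h2 : Real.exp (-(2*u)) * Real.exp (2*u) = 1 := by
    rw [← Real.exp_add]; simp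
  have h3 := Real.exp_pos (2*u)
  nlinarith [mul_le_mul_of_nonneg_right h1 (le_of_lt h3)]

lemma aux3 (u v : ℝ) (hu : 0 ≤ u) (hu1 : u ≤ 1) (hv0 : 0 ≤ v) (hv2 : v ≤ 2) :
    (1-u)^2 * Real.exp (2*u*v) ≤ (1-u)^2 + 2*u*v := by
  have ha : (0:ℝ) ≤ 1 - v/2 := by linarith
  have hb : (0:ℝ) ≤ v/2 := by linarith
  have hab : (1 - v/2) + v/2 = 1 := by ring
  have hconv := convexOn_exp.2 (Set.mem_univ (0:ℝ)) (Set.mem_univ (4*u)) ha hb hab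
  simp only [smul_eq_mul, mul_zero, zero_add, Real.exp_zero, mul_one] at hconv
  have harg : v/2 * (4*u) = 2*u*v := by ring
  rw [harg] at hconv
  have hsq : (1-u)^2 * Real.exp (4*u) ≤ (1+u)^2 := by
    have e1 : (1-u)^2 * Real.exp (4*u) = ((1-u) * Real.exp (2*u))^2 := by
      rw [mul_pow, sq (Real.exp (2*u)), ← Real.exp_add]; ring_nf
    rw [e1]
    have h0 : 0 ≤ (1-u) * Real.exp (2*u) := mul_nonneg (by linarith) (Real.exp_pos _).le
    have h1 := aux2 u hu
    nlinarith
  have hexp := Real.exp_pos (4*u)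
  have hmul := mul_le_mul_of_nonneg_left hconv (sq_nonneg (1-u))
  nlinarith [mul_le_mul_of_nonneg_right hsq hb]

lemma prime_factor (p : ℕ) (hp : p.Prime) (α t : ℝ) (hα : 0 < α) :
    ‖(1 - (p:ℂ) ^ (-((α:ℂ) + (t:ℂ)*Complex.I)))⁻¹‖
      ≤ (1 - (p:ℝ) ^ (-α))⁻¹
        * Real.exp (-((1 - Real.cos (t * Real.log p)) / (p:ℝ)^α)) := by
  have hp1 : (1:ℝ) < (p:ℝ) := by exact_mod_cast hp.one_lt
  have hp0 : (0:ℝ) < (p:ℝ) := by linarith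
  set u : ℝ := (p:ℝ) ^ (-α) with hudef
  have hu0 : 0 < u := Real.rpow_pos_of_pos hp0 _
  have hu1 : u < 1 := Real.rpow_lt_one_of_one_lt_of_neg hp1 (by linarith)
  set s : ℂ := (α:ℂ) + (t:ℂ)*Complex.I with hsdef
  set z : ℂ := (p:ℂ) ^ (-s) with hzdef
  set c : ℝ := Real.cos (t * Real.log p) with hcdef
  have hc1 : c ≤ 1 := Real.cos_le_one _
  have hc2 : -1 ≤ c := Real.neg_one_le_cos _
  -- z = exp((log p) * (-s))
  have hz : z = Complex.exp ((Real.log p : ℂ) * (-s)) := by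
    rw [hzdef, Complex.cpow_def_of_ne_zero (by exact_mod_cast hp.pos.ne' : (p:ℂ) ≠ 0)]
    congr 1
    rw [show ((p:ℂ)) = ((p:ℝ):ℂ) by push_cast; ring, Complex.ofReal_log hp0.le]
  have hres : (-s).re = -α := by simp [hsdef]
  have hims : (-s).im = -t := by simp [hsdef]
  have hre : z.re = u * c := by
    rw [hz, Complex.exp_re]
    have h1 : ((Real.log p : ℂ) * (-s)).re = -(Real.log p * α) := by
      rw [Complex.re_ofReal_mul, hres]; ring
    have h2 : ((Real.log p : ℂ) * (-s)).im = -(t * Real.log p) := by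
      rw [Complex.im_ofReal_mul, hims]; ring
    rw [h1, h2, Real.cos_neg, hudef, Real.rpow_def_of_pos hp0, hcdef]
    rw [show -(Real.log p * α) = Real.log p * (-α) by ring]
  have habs : ‖z‖ = u := by
    rw [hzdef, show ((p:ℂ)) = ((p:ℝ):ℂ) by push_cast; ring,
      Complex.norm_cpow_eq_rpow_re_of_pos hp0]
    simp [hsdef, hudef]
  have hnormsq : Complex.normSq (1 - z) = (1-u)^2 + 2*u*(1-c) := by
    have h3 : z.re^2 + z.im^2 = u^2 := by
      have h4 := Complex.sq_norm z
      rw [habs, Complex.normSq_apply] at h4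
      linarith [h4]
    rw [Complex.normSq_apply, Complex.sub_re, Complex.sub_im, Complex.one_re, Complex.one_im]
    linear_combination h3 - 2*hre
  have hkey : (1-u) * Real.exp (u*(1-c)) ≤ ‖1 - z‖ := by
    have h4 := aux3 u (1-c) hu0.le hu1.le (by linarith) (by linarith)
    have h5 : ((1-u) * Real.exp (u*(1-c)))^2 ≤ ‖1-z‖^2 := by
      rw [Complex.sq_norm, hnormsq, mul_pow, sq (Real.exp (u*(1-c))), ← Real.exp_add]
      calc (1-u)^2 * Real.exp (u*(1-c) + u*(1-c)) = (1-u)^2 * Real.exp (2*u*(1-c)) := by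
            ring_nf
        _ ≤ (1-u)^2 + 2*u*(1-c) := h4
    have h6 : 0 ≤ (1-u) * Real.exp (u*(1-c)) := mul_nonneg (by linarith) (Real.exp_pos _).le
    nlinarith [norm_nonneg (1-z)]
  have hpos : 0 < (1-u) * Real.exp (u*(1-c)) :=
    mul_pos (by linarith) (Real.exp_pos _)
  rw [norm_inv]
  have h7 : ‖1-z‖⁻¹ ≤ ((1-u) * Real.exp (u*(1-c)))⁻¹ :=
    inv_anti₀ hpos hkey
  calc ‖1-z‖⁻¹ ≤ ((1-u) * Real.exp (u*(1-c)))⁻¹ := h7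
    _ = (1-u)⁻¹ * Real.exp (-(u*(1-c))) := by
        rw [mul_inv, Real.exp_neg]
    _ = (1 - (p:ℝ)^(-α))⁻¹ * Real.exp (-((1 - c) / (p:ℝ)^α)) := by
        rw [hudef, Real.rpow_neg hp0.le]
        ring_nf


lemma zeta_bound (y α t : ℝ) (hα : 0 < α) :
    ‖zetaC ((α:ℂ) + (t:ℂ)*Complex.I) y‖
      ≤ zetaR α y * Real.exp (-(W α y 1 t)) := by
  have hset : (Finset.range (⌊y⌋₊ + 1)).filter (fun p : ℕ => Nat.Prime p ∧ (1:ℝ) < (p : ℝ))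
      = (Finset.range (⌊y⌋₊ + 1)).filter Nat.Prime := by
    apply Finset.filter_congr
    intro p _
    simp only [iff_self_and, and_iff_left_iff_imp]
    intro hp
    exact_mod_cast hp.one_lt
  rw [zetaC, zetaR, W, hset, norm_prod, ← Finset.sum_neg_distrib, Real.exp_sum,
    ← Finset.prod_mul_distrib]
  apply Finset.prod_le_prod
  · intro p _; exact norm_nonneg _
  · intro p hp
    have hp' : p.Prime := (Finset.mem_filter.1 hp).2
    exact prime_factor p hp' α t hα

lemma habs_cpow (p : ℕ) (hp : p.Prime) (α t : ℝ) :
    ‖(p:ℂ) ^ (-((α:ℂ) + (t:ℂ)*Complex.I))‖ = (p:ℝ) ^ (-α) := by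
  have hp0 : (0:ℝ) < (p:ℝ) := by exact_mod_cast hp.pos
  rw [show ((p:ℂ)) = ((p:ℝ):ℂ) by push_cast; ring,
    Complex.norm_cpow_eq_rpow_re_of_pos hp0]
  congr 1
  simp

lemma one_sub_ne (p : ℕ) (hp : p.Prime) (α t : ℝ) (hα : 0 < α) :
    (1 : ℂ) - (p:ℂ) ^ (-((α:ℂ) + (t:ℂ)*Complex.I)) ≠ 0 := by
  intro h
  have hz : (p:ℂ) ^ (-((α:ℂ) + (t:ℂ)*Complex.I)) = 1 := by
    have := sub_eq_zero.1 h
    exact this.symm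
  have h1 : ‖(p:ℂ) ^ (-((α:ℂ) + (t:ℂ)*Complex.I))‖ = 1 := by
    rw [hz]; simp
  rw [habs_cpow p hp α t] at h1
  have hp1 : (1:ℝ) < (p:ℝ) := by exact_mod_cast hp.one_lt
  have := Real.rpow_lt_one_of_one_lt_of_neg hp1 (by linarith : -α < 0)
  linarith [h1 ▸ this]

lemma contf (y α : ℝ) (x : ℝ) (hx : 0 < x) (hα : 0 < α) :
    Continuous (fun t : ℝ => zetaC ((α : ℂ) + (t : ℂ) * Complex.I) y *
      (x : ℂ) ^ ((α : ℂ) + (t : ℂ) * Complex.I) / ((α : ℂ) + (t : ℂ) * Complex.I)) := by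
  have hcs : Continuous (fun t : ℝ => (α : ℂ) + (t : ℂ) * Complex.I) := by
    continuity
  have hne : ∀ t : ℝ, (α : ℂ) + (t : ℂ) * Complex.I ≠ 0 := by
    intro t h
    have := congrArg Complex.re h
    simp at this
    linarith
  apply Continuous.div
  · apply Continuous.mul
    · unfold zetaC
      apply continuous_finset_prod
      intro p hp
      have hp' : p.Prime := (Finset.mem_filter.1 hp).2
      apply Continuous.inv₀
      · apply Continuous.sub continuous_const
        exact Continuous.const_cpow hcs.neg (Or.inl (by exact_mod_cast hp'.pos.ne'))
      · intro t
        exact one_sub_ne p hp' α t hα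
    · exact Continuous.const_cpow hcs (Or.inl (by exact_mod_cast hx.ne'))
  · exact hcs
  · exact hne

lemma contg (y α : ℝ) (hα : 0 < α) :
    Continuous (fun t : ℝ => Real.exp (-W α y 1 t) / Real.sqrt (α ^ 2 + t ^ 2)) := by
  apply Continuous.div
  · apply Real.continuous_exp.comp
    apply Continuous.neg
    unfold W
    apply continuous_finset_sum
    intro p _
    apply Continuous.div_const
    apply Continuous.sub continuous_const
    exact Real.continuous_cos.comp (continuous_id.mul continuous_const)
  · exact Real.continuous_sqrt.comp (by continuity)
  · intro t
    have : 0 < α ^ 2 + t ^ 2 := by positivity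
    exact (Real.sqrt_pos.2 this).ne'

/-- The contour integral `∫_{α+iT₀}^{α+iT} ζ(s,y) x^s/s ds` along the vertical
segment `s = α + it`, `T₀ ≤ t ≤ T`, is `i ∫_{T₀}^{T} ζ(α+it,y) x^{α+it}/(α+it) dt`. -/
theorem stmt_8 (x y α T₀ T : ℝ) (hx : 0 < x) (hy : 2 ≤ y) (hα : 0 < α)
    (hT₀ : 0 < T₀) (hT : T₀ ≤ T) :
    ‖(Complex.I * ∫ t in T₀..T,
        zetaC ((α : ℂ) + (t : ℂ) * Complex.I) y *
          (x : ℂ) ^ ((α : ℂ) + (t : ℂ) * Complex.I) /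
          ((α : ℂ) + (t : ℂ) * Complex.I))‖
      ≤ x ^ α * zetaR α y *
        ∫ t in T₀..T, Real.exp (-W α y 1 t) / Real.sqrt (α ^ 2 + t ^ 2) := by

  set f : ℝ → ℂ := fun t => zetaC ((α : ℂ) + (t : ℂ) * Complex.I) y *
      (x : ℂ) ^ ((α : ℂ) + (t : ℂ) * Complex.I) / ((α : ℂ) + (t : ℂ) * Complex.I) with hfdef
  set g : ℝ → ℝ := fun t => x ^ α * zetaR α y *
      (Real.exp (-W α y 1 t) / Real.sqrt (α ^ 2 + t ^ 2)) with hgdef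
  have hcf : Continuous f := contf y α x hx hα
  have hcg : Continuous g := by
    exact continuous_const.mul (contg y α hα)
  have hxα : (0:ℝ) < x ^ α := Real.rpow_pos_of_pos hx α
  -- pointwise bound
  have hpt : ∀ t : ℝ, ‖f t‖ ≤ g t := by
    intro t
    have habsx : ‖(x : ℂ) ^ ((α : ℂ) + (t : ℂ) * Complex.I)‖ = x ^ α := by
      rw [show ((x:ℂ)) = ((x:ℝ):ℂ) by push_cast; ring,
        Complex.norm_cpow_eq_rpow_re_of_pos hx]
      congr 1
      simp
    have habss : ‖(α : ℂ) + (t : ℂ) * Complex.I‖ = Real.sqrt (α ^ 2 + t ^ 2) := by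
      rw [Complex.norm_def, Complex.normSq_apply]
      congr 1 <;> simp <;> ring
    have hS : 0 < Real.sqrt (α ^ 2 + t ^ 2) := Real.sqrt_pos.2 (by positivity)
    have hzb := zeta_bound y α t hα
    rw [hfdef]
    simp only []
    rw [norm_div, norm_mul, habsx, habss, hgdef]
    have h1 : ‖zetaC ((α : ℂ) + (t : ℂ) * Complex.I) y‖ * x ^ α
        ≤ zetaR α y * Real.exp (-(W α y 1 t)) * x ^ α :=
      mul_le_mul_of_nonneg_right hzb hxα.le
    calc ‖zetaC ((α : ℂ) + (t : ℂ) * Complex.I) y‖ * x ^ α / Real.sqrt (α ^ 2 + t ^ 2)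
        ≤ zetaR α y * Real.exp (-(W α y 1 t)) * x ^ α / Real.sqrt (α ^ 2 + t ^ 2) := by
          exact div_le_div_of_nonneg_right h1 hS.le
      _ = x ^ α * zetaR α y * (Real.exp (-W α y 1 t) / Real.sqrt (α ^ 2 + t ^ 2)) := by
          ring
  calc ‖Complex.I * ∫ t in T₀..T, f t‖
      = ‖∫ t in T₀..T, f t‖ := by rw [norm_mul, Complex.norm_I, one_mul]
    _ ≤ ∫ t in T₀..T, ‖f t‖ := by
        exact intervalIntegral.norm_integral_le_integral_norm hT
    _ ≤ ∫ t in T₀..T, g t := by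
        apply intervalIntegral.integral_mono_on hT
        · exact (hcf.norm).intervalIntegrable T₀ T
        · exact hcg.intervalIntegrable T₀ T
        · intro t _
          exact hpt t
    _ = x ^ α * zetaR α y *
        ∫ t in T₀..T, Real.exp (-W α y 1 t) / Real.sqrt (α ^ 2 + t ^ 2) := by
        rw [hgdef]
        exact intervalIntegral.integral_const_mul _ _
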